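/- Let K be a field, L a Lie algebra over K, and A a commutative unital K-algebra. Inside the Lie algebra of derivations of L ⊗ A, the subspace {1⊗d : d ∈ Der(A)} (where 1⊗d denotes the derivation x⊗a ↦ x⊗d(a)) intersects the space of inner derivations ad(L ⊗ A) trivially: if 1⊗d = ad(w) for some w ∈ L ⊗ A, then 1⊗d = 0; in particular, if L ≠ 0 then d = 0. -/

import Mathlib

/-!
STATEMENT 1: For a field `K`, a Lie algebra `L` over `K` and a commutative unital
`K`-algebra `A`, inside the tensor product Lie algebra `L ⊗ A`
(realized as `A ⊗[K] L` with `⁅a ⊗ x, b ⊗ y⁆ = (a*b) ⊗ ⁅x,y⁆`), the derivation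
`1 ⊗ d : x ⊗ a ↦ x ⊗ d(a)` (here `LinearMap.rTensor L d`, acting on the `A`-factor)
coincides with an inner derivation `ad(w)` only when it is zero; in particular,
if `L ≠ 0` then `d = 0`.
-/

open scoped TensorProduct

theorem statement1
    (K : Type) [Field K] (L : Type) [LieRing L] [LieAlgebra K L]
    (A : Type) [CommRing A] [Algebra K A]
    (d : Derivation K A A) (w : A ⊗[K] L)
    (h : ∀ u : A ⊗[K] L, LinearMap.rTensor L (d.toLinearMap) u = ⁅w, u⁆) :
    LinearMap.rTensor L (d.toLinearMap) = 0 ∧ (Nontrivial L → d = 0) := by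
  -- Key: for every a : A and x : L, d a ⊗ x = 0.
  have key : ∀ (a : A) (x : L), (d a) ⊗ₜ[K] x = (0 : A ⊗[K] L) := by
    intro a x
    have h1 : LinearMap.rTensor L d.toLinearMap ((1 : A) ⊗ₜ[K] x) = 0 := by
      simp [LinearMap.rTensor_tmul]
    have h2 : ⁅w, (1 : A) ⊗ₜ[K] x⁆ = 0 := by rw [← h]; exact h1
    have h3 : a • ((1 : A) ⊗ₜ[K] x) = a ⊗ₜ[K] x := by
      rw [TensorProduct.smul_tmul', smul_eq_mul, mul_one]
    calc (d a) ⊗ₜ[K] x = LinearMap.rTensor L d.toLinearMap (a ⊗ₜ[K] x) := by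
          simp [LinearMap.rTensor_tmul]
      _ = ⁅w, a ⊗ₜ[K] x⁆ := h _
      _ = ⁅w, a • ((1 : A) ⊗ₜ[K] x)⁆ := by rw [h3]
      _ = a • ⁅w, (1 : A) ⊗ₜ[K] x⁆ := lie_smul a w _
      _ = 0 := by rw [h2, smul_zero]
  constructor
  · apply TensorProduct.ext'
    intro a x
    simpa [LinearMap.rTensor_tmul] using key a x
  · intro hL
    obtain ⟨x, hx⟩ := exists_ne (0 : L)
    ext a
    have := key a x
    -- tensor with a nonzero vector over a field is injective in the first factor
    have hinj : Function.Injective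
        (LinearMap.lTensor A ((LinearMap.toSpanSingleton K L x))) :=
      Module.Flat.lTensor_preserves_injective_linearMap _
        (LinearMap.ker_eq_bot.mp (LinearMap.ker_toSpanSingleton (R := K) (M := L) hx))
    have h0 : LinearMap.lTensor A (LinearMap.toSpanSingleton K L x) ((d a) ⊗ₜ[K] (1 : K))
        = LinearMap.lTensor A (LinearMap.toSpanSingleton K L x) 0 := by
      rw [map_zero, LinearMap.lTensor_tmul, LinearMap.toSpanSingleton_apply, one_smul]
      exact this
    have h4 : (d a) ⊗ₜ[K] (1 : K) = (0 : A ⊗[K] K) := hinj h0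
    have h5 := congrArg (TensorProduct.rid K A) h4
    simpa using h5
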